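/- If P and Q are orthogonal projections on a Hilbert space with ‖PQ‖ < 1 such that Ran P ⊕ Ran Q (as a direct, not necessarily orthogonal, sum) is the whole space, then T = (I − PQ)⁻¹ P (I − PQ) is the idempotent with range Ran P and kernel Ran Q. -/

import Mathlib

/-- If `P` and `Q` are orthogonal projections on a complex Hilbert space with `‖PQ‖ < 1`
such that `Ran P ⊕ Ran Q` (a direct, not necessarily orthogonal, sum) is the whole space,
then `T = (I − PQ)⁻¹ P (I − PQ)` is the idempotent with range `Ran P` and kernel `Ran Q`. -/
theorem afriat_formula_idempotent
    {H : Type*} [NormedAddCommGroup H] [InnerProductSpace ℂ H] [CompleteSpace H]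
    (P Q : H →L[ℂ] H)
    (hP : IsSelfAdjoint P) (hP2 : IsIdempotentElem P)
    (hQ : IsSelfAdjoint Q) (hQ2 : IsIdempotentElem Q)
    (hPQ : ‖P * Q‖ < 1)
    (hsum : LinearMap.range (P : H →ₗ[ℂ] H) ⊔ LinearMap.range (Q : H →ₗ[ℂ] H) = ⊤)
    (hint : LinearMap.range (P : H →ₗ[ℂ] H) ⊓ LinearMap.range (Q : H →ₗ[ℂ] H) = ⊥)
    (T : H →L[ℂ] H) (hT : T = Ring.inverse (1 - P * Q) * (P * (1 - P * Q))) :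
    IsIdempotentElem T ∧ LinearMap.range (T : H →ₗ[ℂ] H) = LinearMap.range (P : H →ₗ[ℂ] H) ∧
      LinearMap.ker (T : H →ₗ[ℂ] H) = LinearMap.range (Q : H →ₗ[ℂ] H) := by
  set A : H →L[ℂ] H := 1 - P * Q with hA
  set A' : H →L[ℂ] H := Ring.inverse A with hA'
  have hu : IsUnit A := by
    have := (Units.oneSub (P * Q) hPQ).isUnit
    simpa [hA] using this
  have h1 : A' * A = 1 := Ring.inverse_mul_cancel _ hu
  have h2 : A * A' = 1 := Ring.mul_inverse_cancel _ hu
  have hPA : P * A = P - P * Q := by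
    rw [hA, mul_sub, mul_one, ← mul_assoc, hP2.eq]
  have hAP : A * P = P - P * Q * P := by
    rw [hA, sub_mul, one_mul]
  have hPAP : P * (A * P) = A * P := by
    rw [hAP, mul_sub, ← mul_assoc, hP2.eq, ← mul_assoc, hP2.eq]
  have hTP : T * P = P := by
    rw [hT, mul_assoc, mul_assoc, hPAP, ← mul_assoc, h1, one_mul]
  have h1PA : (1 - P) * A = 1 - P := by
    rw [sub_mul, one_mul, hPA, hA]
    abel
  have h1PA' : (1 - P) * A' = 1 - P := by
    have := congrArg (· * A') h1PA
    simpa [mul_assoc, h2] using this.symm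
  have hPA' : P * A' = A' - (1 - P) := by
    have : P * A' = A' - (1 - P) * A' := by noncomm_ring
    rw [this, h1PA']
  have hPT : P * T = T := by
    rw [hT, ← mul_assoc, hPA', sub_mul, sub_mul, one_mul]
    have : P * (P * A) = P * A := by rw [← mul_assoc, hP2.eq]
    rw [this]
    abel
  have hTQ : T * Q = 0 := by
    have hPAQ : (P * A) * Q = 0 := by
      rw [hPA, sub_mul, mul_assoc, hQ2.eq, sub_self]
    rw [hT, mul_assoc, hPAQ, mul_zero]
  have hTT : IsIdempotentElem T := by
    have key : (P * A) * (A' * (P * A)) = P * A := by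
      rw [← mul_assoc, mul_assoc P A A', h2, mul_one, ← mul_assoc, hP2.eq]
    show T * T = T
    rw [hT, mul_assoc, key]
  refine ⟨hTT, ?_, ?_⟩
  · apply le_antisymm
    · rintro x ⟨y, rfl⟩
      exact ⟨T y, by simp only [ContinuousLinearMap.coe_coe]; rw [← ContinuousLinearMap.mul_apply, hPT]⟩
    · rintro x ⟨y, rfl⟩
      exact ⟨P y, by simp only [ContinuousLinearMap.coe_coe]; rw [← ContinuousLinearMap.mul_apply, hTP]⟩
  · apply le_antisymm
    · intro x hx
      have hx' : x ∈ LinearMap.range (P : H →ₗ[ℂ] H) ⊔ LinearMap.range (Q : H →ₗ[ℂ] H) := by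
        rw [hsum]; trivial
      obtain ⟨p, ⟨yp, rfl⟩, q, ⟨yq, rfl⟩, rfl⟩ := Submodule.mem_sup.mp hx'
      have hq : T (Q yq) = 0 := by
        rw [← ContinuousLinearMap.mul_apply, hTQ]; rfl
      have hp : T (P yp) = P yp := by
        rw [← ContinuousLinearMap.mul_apply, hTP]
      have h0 : T (P yp + Q yq) = 0 := hx
      rw [map_add, hq, add_zero, hp] at h0
      rw [ContinuousLinearMap.coe_coe, h0, zero_add]
      exact ⟨yq, rfl⟩
    · rintro x ⟨y, rfl⟩
      show T (Q y) = 0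
      rw [← ContinuousLinearMap.mul_apply, hTQ]; rfl
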